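/- Let X, Y be strings over an alphabet Σ, let 0 ≤ c̄ < c ≤ |X|, W = X[c̄..c), and let g be an integer with 0 < g ≤ |W| that is a period of W. Let ā ≥ 0 and s ≥ 1 be integers with ā + (s−1)g + |W| ≤ |Y| such that Y[ā+ig..ā+ig+|W|) = W for every i ∈ [0..s), and set a = ā + (s−1)g + |W|. Define u = max{d : c + d ≤ |X| and X[c..c+d) = X[c−g..c−g+d)} and v = max{d : a + d ≤ |Y| and Y[a..a+d) = Y[a−g..a−g+d)}, and assume u < |X| − c. Then for every i ∈ [0..s), if X occurs in Y at position p = ā + ig − c̄ (with 0 ≤ p and p + |X| ≤ |Y|), then (s−1−i)g = u − v, i.e., p = a − c + v − u; in particular, there is at most one i ∈ [0..s) for which X occurs in Y at position ā + ig − c̄. -/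
import Mathlib


namespace IPM

/-- A positive integer `g ≤ |S|` is a period of `S` if `S[t] = S[t+g]` for every
`t ∈ [0..|S|−g)`. -/
def IsPeriod {β : Type} (S : List β) (g : ℕ) : Prop :=
  0 < g ∧ g ≤ S.length ∧ ∀ t, t + g < S.length → S[t]? = S[t + g]?

/-- `W` occurs in `S` at position `p`, i.e. `S[p..p+|W|) = W`. -/
def OccursAt {β : Type} (W S : List β) (p : ℕ) : Prop :=
  p + W.length ≤ S.length ∧ (S.drop p).take W.length = W

private lemma td_iff {β : Type} (Y : List β) (p q n : ℕ) :
    (Y.drop p).take n = (Y.drop q).take n ↔ ∀ t < n, Y[p+t]? = Y[q+t]? := by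
  constructor
  · intro h t ht
    have := congrArg (fun l => l[t]?) h
    simpa [List.getElem?_take, ht, List.getElem?_drop] using this
  · intro h
    apply List.ext_getElem?
    intro t
    by_cases ht : t < n <;> simp [List.getElem?_take, List.getElem?_drop, ht]
    exact h t ht

/-- Let `W = X[c̄..c)` with `0 ≤ c̄ < c ≤ |X|`, let `g` with
`0 < g ≤ |W|` be a period of `W`, let `Y[ā+ig..ā+ig+|W|) = W` for all `i ∈ [0..s)`,
and set `a = ā + (s−1)g + |W|`. Let `u` and `v` be the maximal forward extensions of
the period `g` at position `c` of `X` and at position `a` of `Y`, and assume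
`u < |X| − c`. Then for every `i ∈ [0..s)`, if `X` occurs in `Y` at position
`ā + ig − c̄` (nonnegative, with the occurrence inside `Y`), then `(s−1−i)g = u − v`
(i.e. `(s−1−i)g + v = u`); in particular at most one `i ∈ [0..s)` yields an
occurrence. -/
theorem right_mismatch_unique_candidate {β : Type} (X Y : List β)
    (cb c : ℕ) (hcb : cb < c) (hc : c ≤ X.length)
    (W : List β) (hW : W = (X.drop cb).take (c - cb))
    (g : ℕ) (hgW : IsPeriod W g)
    (ab s : ℕ) (hs : 1 ≤ s) (hfit : ab + (s - 1) * g + W.length ≤ Y.length)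
    (hoccW : ∀ i < s, OccursAt W Y (ab + i * g))
    (a : ℕ) (ha : a = ab + (s - 1) * g + W.length)
    (u : ℕ) (hu : IsGreatest {d : ℕ | c + d ≤ X.length ∧
      (X.drop c).take d = (X.drop (c - g)).take d} u)
    (v : ℕ) (hv : IsGreatest {d : ℕ | a + d ≤ Y.length ∧
      (Y.drop a).take d = (Y.drop (a - g)).take d} v)
    (huc : u < X.length - c) :
    (∀ i < s, cb ≤ ab + i * g → OccursAt X Y (ab + i * g - cb) →
      (s - 1 - i) * g + v = u) ∧
    (∀ i < s, ∀ j < s,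
      cb ≤ ab + i * g → OccursAt X Y (ab + i * g - cb) →
      cb ≤ ab + j * g → OccursAt X Y (ab + j * g - cb) → i = j) := by
  obtain ⟨hg0, hgle, hper0⟩ := hgW
  have hm : W.length = c - cb := by
    rw [hW]; simp; omega
  set m := c - cb with hmdef
  have hgm : g ≤ m := by omega
  have hgc : g ≤ c := by omega
  have hm1 : 1 ≤ m := by omega
  -- period of W, restated
  have hper : ∀ r, r + g < m → W[r]? = W[r+g]? := by
    intro r hr; exact hper0 r (by omega)
  -- occurrences of W, pointwise
  have hocc : ∀ i < s, ab + i * g + m ≤ Y.length ∧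
      ∀ t < m, Y[ab + i*g + t]? = W[t]? := by
    intro i hi
    obtain ⟨h1, h2⟩ := hoccW i hi
    refine ⟨by omega, ?_⟩
    intro t ht
    have := congrArg (fun l => l[t]?) h2
    simpa [List.getElem?_take, List.getElem?_drop, hm, ht,
      show t < W.length by omega] using this
  -- the block Y[ab .. a) has period g
  have hYper : ∀ q, q + g < (s-1)*g + m → Y[ab+q]? = Y[ab+q+g]? := by
    intro q hq
    set i := min (q / g) (s-1) with hidef
    have hig : i * g ≤ q :=
      le_trans (Nat.mul_le_mul_right g (min_le_left _ _)) (Nat.div_mul_le_self q g)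
    have his : i ≤ s - 1 := min_le_right _ _
    have his' : i < s := by omega
    have hr : q - i * g < m := by
      by_cases hcase : q / g ≤ s - 1
      · have hie : i = q / g := min_eq_left hcase
        have hdm := Nat.div_add_mod q g
        have hmlt : q % g < g := Nat.mod_lt q hg0
        have : i * g = g * (q / g) := by rw [hie, Nat.mul_comm]
        omega
      · have hie : i = s - 1 := min_eq_right (by omega)
        rw [hie] at hig ⊢
        omega
    set r := q - i * g with hrdef
    have hqr : q = i * g + r := by omega
    by_cases hrg : r + g < m
    · calc Y[ab+q]? = Y[ab+i*g+r]? := by rw [show ab+q = ab+i*g+r from by omega]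
        _ = W[r]? := (hocc i his').2 r hr
        _ = W[r+g]? := hper r hrg
        _ = Y[ab+i*g+(r+g)]? := ((hocc i his').2 (r+g) hrg).symm
        _ = Y[ab+q+g]? := by rw [show ab+i*g+(r+g) = ab+q+g from by omega]
    · have his1 : i + 1 < s := by
        by_contra h
        have hie : i = s - 1 := by omega
        rw [hie] at hqr
        omega
      calc Y[ab+q]? = Y[ab+i*g+r]? := by rw [show ab+q = ab+i*g+r from by omega]
        _ = W[r]? := (hocc i his').2 r hr
        _ = Y[ab+(i+1)*g+r]? := ((hocc (i+1) his1).2 r hr).symm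
        _ = Y[ab+q+g]? := by
            rw [show ab+(i+1)*g+r = ab+q+g from by rw [Nat.add_mul, one_mul]; omega]
  -- facts about u
  have hcuX : c + u < X.length := by omega
  have hXu : ∀ t < u, X[c+t]? = X[(c-g)+t]? := (td_iff X c (c-g) u).1 hu.1.2
  have hmis : X[c+u]? ≠ X[(c-g)+u]? := by
    intro heqm
    have hmem : u + 1 ∈ {d : ℕ | c + d ≤ X.length ∧
        (X.drop c).take d = (X.drop (c - g)).take d} := by
      refine ⟨by omega, (td_iff X c (c-g) (u+1)).2 ?_⟩
      intro t ht
      rcases Nat.lt_or_ge t u with h | h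
      · exact hXu t h
      · have : t = u := by omega
        rw [this]; exact heqm
    have := hu.2 hmem
    omega
  -- key claim
  have key : ∀ i < s, cb ≤ ab + i * g → OccursAt X Y (ab + i * g - cb) →
      (s - 1 - i) * g + v = u := by
    intro i hi hcble hoccX
    obtain ⟨hlen, heq⟩ := hoccX
    set p := ab + i * g - cb with hpdef
    have hXY : ∀ t < X.length, Y[p+t]? = X[t]? := by
      intro t ht
      have := congrArg (fun l => l[t]?) heq
      simpa [List.getElem?_take, List.getElem?_drop, ht] using this
    set k := (s - 1 - i) * g with hkdef
    have hkg : (s-1)*g = i*g + k := by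
      rw [hkdef, ← Nat.add_mul]
      congr 2
      omega
    have hq : p + c = ab + i * g + m := by omega
    have ha2 : a = p + c + k := by omega
    -- transfer of u-facts to Y at position p + c
    have hYu : ∀ t < u, Y[p+c+t]? = Y[p+c-g+t]? := by
      intro t ht
      calc Y[p+c+t]? = X[c+t]? := by
            rw [show p+c+t = p+(c+t) from by omega]; exact hXY (c+t) (by omega)
        _ = X[(c-g)+t]? := hXu t ht
        _ = Y[p+((c-g)+t)]? := (hXY ((c-g)+t) (by omega)).symm
        _ = Y[p+c-g+t]? := by rw [show p+((c-g)+t) = p+c-g+t from by omega]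
    have hYmis : Y[p+c+u]? ≠ Y[p+c-g+u]? := by
      intro heqm
      apply hmis
      calc X[c+u]? = Y[p+(c+u)]? := (hXY (c+u) (by omega)).symm
        _ = Y[p+c-g+u]? := by rw [show p+(c+u) = p+c+u from by omega]; exact heqm
        _ = Y[p+((c-g)+u)]? := by rw [show p+c-g+u = p+((c-g)+u) from by omega]
        _ = X[(c-g)+u]? := hXY ((c-g)+u) (by omega)
    have hku : k ≤ u := by
      by_contra h
      apply hYmis
      have := hYper (p+c-g+u-ab) (by omega)
      rw [show ab+(p+c-g+u-ab) = p+c-g+u from by omega] at this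
      rw [show p+c-g+u+g = p+c+u from by omega] at this
      exact this.symm
    have hmem : u - k ∈ {d : ℕ | a + d ≤ Y.length ∧
        (Y.drop a).take d = (Y.drop (a - g)).take d} := by
      refine ⟨by omega, (td_iff Y a (a-g) (u-k)).2 ?_⟩
      intro e he
      have := hYu (k+e) (by omega)
      rw [show p+c+(k+e) = a+e from by omega,
        show p+c-g+(k+e) = a-g+e from by omega] at this
      exact this
    have h1 : u - k ≤ v := hv.2 hmem
    have h2 : v ≤ u - k := by
      by_contra h
      apply hYmis
      have := ((td_iff Y a (a-g) v).1 hv.1.2) (u-k) (by omega)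
      rw [show a+(u-k) = p+c+u from by omega,
        show a-g+(u-k) = p+c-g+u from by omega] at this
      exact this
    omega
  refine ⟨key, ?_⟩
  intro i hi j hj hi1 hi2 hj1 hj2
  have e1 := key i hi hi1 hi2
  have e2 := key j hj hj1 hj2
  have : s - 1 - i = s - 1 - j := Nat.eq_of_mul_eq_mul_right hg0 (by omega)
  omega

end IPM
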